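/- Let n ≥ 3 be an odd integer and let p, q be distinct odd primes with q² < pⁿ. Let d be the square-free part of q² − pⁿ. If q ≢ ±1 (mod |d|), then d < −3; in particular the only units of the ring of integers of Q(√d) are ±1. -/

import Mathlib

open NumberField

lemma ratRoot (r : ℚ) (N : ℤ) (h : r ^ 2 = (N : ℚ)) : ∃ k : ℤ, k ^ 2 = N := by
  have hint : IsIntegral ℤ r := by
    refine ⟨Polynomial.X ^ 2 - Polynomial.C N, Polynomial.monic_X_pow_sub_C _ (by norm_num), ?_⟩
    rw [Polynomial.eval₂_sub, Polynomial.eval₂_X_pow, Polynomial.eval₂_C, h]; simp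
  obtain ⟨k, hk⟩ := IsIntegrallyClosed.isIntegral_iff.mp hint
  refine ⟨k, ?_⟩
  have : ((k : ℚ)) ^ 2 = (N : ℚ) := by rw [show ((k:ℤ):ℚ) = r from hk, h]
  exact_mod_cast this

set_option maxHeartbeats 1600000 in
/-- Let `n ≥ 3` be odd and `p ≠ q` odd primes with `q² < pⁿ`, and let `d < 0` be the
square-free part of `q² − pⁿ`.  If `q ≢ ±1 (mod |d|)`, then `d < −3`; in particular the only
units of the ring of integers of `ℚ(√d)` are `±1`. -/
theorem d_lt_neg_three_and_units
    (n : ℕ) (hn : 3 ≤ n) (hnodd : Odd n)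
    (p q : ℕ) (hp : p.Prime) (hq : q.Prime) (hpodd : Odd p) (hqodd : Odd q) (hpq : p ≠ q)
    (hlt : (q : ℤ) ^ 2 < (p : ℤ) ^ n)
    (d : ℤ) (m : ℕ) (hm : 0 < m) (hdsf : Squarefree d) (hdneg : d < 0)
    (hfac : (q : ℤ) ^ 2 - (p : ℤ) ^ n = (m : ℤ) ^ 2 * d)
    (hq1 : ¬ (q : ℤ) ≡ 1 [ZMOD |d|]) (hq1' : ¬ (q : ℤ) ≡ -1 [ZMOD |d|])
    (K : Type) [Field K] [NumberField K]
    (x : K) (hx : x ^ 2 = (d : K)) (hdeg : Module.finrank ℚ K = 2) :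
    d < -3 ∧ ∀ u : (𝓞 K)ˣ, (u : 𝓞 K) = 1 ∨ (u : 𝓞 K) = -1 := by
  have hd4 : d < -3 := by
    by_contra hcon
    push_neg at hcon
    interval_cases d
    · -- d = -3
      simp only [show |(-3:ℤ)| = 3 by norm_num] at hq1 hq1'
      have h3q : (3:ℤ) ∣ (q:ℤ) := by
        simp only [Int.ModEq] at hq1 hq1'
        omega
      have hq3 : q = 3 := by
        have : (3:ℕ) ∣ q := by exact_mod_cast h3q
        exact ((Nat.prime_dvd_prime_iff_eq (by norm_num) hq).mp this).symm
      have h3p : (3:ℤ) ∣ (p:ℤ) ^ n := by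
        subst hq3
        refine ⟨3 + (m:ℤ)^2, by push_cast at hfac ⊢; linarith⟩
      have h3p' : (3:ℤ) ∣ (p:ℤ) := Int.Prime.dvd_pow' (by norm_num) h3p
      have hp3 : p = 3 := by
        have : (3:ℕ) ∣ p := by exact_mod_cast h3p'
        exact ((Nat.prime_dvd_prime_iff_eq (by norm_num) hp).mp this).symm
      exact hpq (hp3.trans hq3.symm)
    · -- d = -2
      apply hq1
      obtain ⟨kq, hkq⟩ := hqodd
      simp only [show |(-2:ℤ)| = 2 by norm_num, Int.ModEq]
      subst hkq; push_cast; omega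
    · -- d = -1
      exact hq1 (by simp only [show |(-1:ℤ)| = 1 by norm_num]; exact Int.modEq_one)
  refine ⟨hd4, ?_⟩
  have hd5 : d ≤ -5 := by
    rcases (by omega : d = -4 ∨ d ≤ -5) with h | h
    · exfalso
      have h4 : (2:ℤ) * 2 ∣ d := by rw [h]; decide
      have := hdsf 2 h4
      rw [Int.isUnit_iff] at this; omega
    · exact h
  have hdQ : (d:ℚ) ≤ -5 := by exact_mod_cast hd5
  -- no rational is x
  have key : ∀ r : ℚ, (r : K) ≠ x := by
    intro r hr
    have h1 : ((r:K))^2 = ((d:ℤ):K) := by rw [hr, hx]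
    have h2 : (r^2 : ℚ) = ((d:ℤ):ℚ) := by exact_mod_cast h1
    nlinarith [sq_nonneg r]
  -- linear independence of 1, x
  have hli : LinearIndependent ℚ ![(1:K), x] := by
    rw [linearIndependent_fin2]
    constructor
    · show x ≠ 0
      intro h0
      have h1 : ((d:ℤ):K) = 0 := by rw [← hx, h0]; ring
      have : (d:ℤ) = 0 := by exact_mod_cast h1
      omega
    · intro a
      simp only [Matrix.cons_val_one, Matrix.head_cons, Matrix.cons_val_zero]
      intro ha
      have ha0 : a ≠ 0 := by rintro rfl; simp at ha
      have hmul : (a:K) * x = 1 := by rw [← ha, Algebra.smul_def, eq_ratCast]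
      have : ((a⁻¹ : ℚ) : K) = x := by
        rw [Rat.cast_inv]
        exact inv_eq_of_mul_eq_one_right hmul
      exact key _ this
  have hspan : Submodule.span ℚ (Set.range ![(1:K), x]) = ⊤ := by
    apply Submodule.eq_top_of_finrank_eq
    rw [finrank_span_eq_card hli, hdeg]
    simp
  have hrep : ∀ z : K, ∃ a b : ℚ, z = (a : K) + (b : K) * x := by
    intro z
    have hz : z ∈ Submodule.span ℚ (Set.range ![(1:K), x]) := by rw [hspan]; trivial
    rw [Submodule.mem_span_range_iff_exists_fun] at hz
    obtain ⟨cf, hcf⟩ := hz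
    refine ⟨cf 0, cf 1, ?_⟩
    rw [Fin.sum_univ_two] at hcf
    simp only [Matrix.cons_val_zero, Matrix.cons_val_one, Matrix.head_cons] at hcf
    rw [← hcf, Algebra.smul_def, Algebra.smul_def, eq_ratCast, eq_ratCast, mul_one]
  -- complex embedding
  obtain ⟨φ⟩ : Nonempty (K →+* ℂ) := inferInstance
  set c : ℂ := φ x with hcdef
  have hc2 : c ^ 2 = (d : ℂ) := by rw [hcdef, ← map_pow, hx, map_intCast]
  have hcre : c.re = 0 := by
    have h1 : (c ^ 2).im = 0 := by rw [hc2]; simp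
    have h2 : (c ^ 2).re = (d : ℝ) := by rw [hc2]; simp
    rw [sq, Complex.mul_im] at h1
    rw [sq, Complex.mul_re] at h2
    by_contra hre
    have him : c.im = 0 := by
      rcases mul_eq_zero.mp (by linarith : c.re * c.im = 0) with h | h
      · exact absurd h hre
      · exact h
    rw [him] at h2
    have hdR : (d : ℝ) < 0 := by exact_mod_cast hdneg
    nlinarith [sq_nonneg c.re]
  set ψ : K →+* ℂ := (starRingEnd ℂ).comp φ with hψdef
  have hstar : (starRingEnd ℂ) c = -c := by
    apply Complex.ext <;> simp [hcre]
  have hφv : ∀ (aa bb : ℚ), φ ((aa:K) + (bb:K) * x) = (aa:ℂ) + (bb:ℂ) * c := by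
    intro aa bb; rw [map_add, map_mul, map_ratCast, map_ratCast]
  have hψv : ∀ (aa bb : ℚ), ψ ((aa:K) + (bb:K) * x) = (aa:ℂ) - (bb:ℂ) * c := by
    intro aa bb
    show (starRingEnd ℂ) (φ _) = _
    rw [hφv, map_add, map_mul, hstar, map_ratCast, map_ratCast]
    ring
  have hval : ∀ (z : K) (aa bb : ℚ), z = (aa:K) + (bb:K) * x →
      φ z * ψ z = ((aa^2 - d*bb^2 : ℚ) : ℂ) := by
    intro z aa bb hzab
    rw [hzab, hφv, hψv]
    push_cast
    linear_combination (-(bb:ℂ)^2) * hc2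
  have hNint : ∀ (z : K) (aa bb : ℚ), IsIntegral ℤ z → z = (aa:K) + (bb:K) * x →
      ∃ k : ℤ, (k : ℚ) = aa^2 - d * bb^2 := by
    intro z aa bb hzint hzab
    have h1 : IsIntegral ℤ (φ z * ψ z) :=
      (hzint.map φ.toIntAlgHom).mul (hzint.map ψ.toIntAlgHom)
    have h3 : IsIntegral ℤ ((aa^2 - d*bb^2 : ℚ)) := by
      rw [← isIntegral_algebraMap_iff (algebraMap ℚ ℂ).injective]
      rw [eq_ratCast (algebraMap ℚ ℂ), ← hval z aa bb hzab]
      exact h1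
    obtain ⟨k, hk⟩ := IsIntegrallyClosed.isIntegral_iff.mp h3
    exact ⟨k, by rw [← hk]; simp⟩
  have hTint : ∀ (z : K) (aa bb : ℚ), IsIntegral ℤ z → z = (aa:K) + (bb:K) * x →
      ∃ t : ℤ, (t : ℚ) = 2 * aa := by
    intro z aa bb hzint hzab
    have h1 : IsIntegral ℤ (φ z + ψ z) :=
      (hzint.map φ.toIntAlgHom).add (hzint.map ψ.toIntAlgHom)
    have h2 : φ z + ψ z = ((2*aa : ℚ) : ℂ) := by
      rw [hzab, hφv, hψv]; push_cast; ring
    have h3 : IsIntegral ℤ ((2*aa : ℚ)) := by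
      rw [← isIntegral_algebraMap_iff (algebraMap ℚ ℂ).injective]
      rw [eq_ratCast (algebraMap ℚ ℂ), ← h2]
      exact h1
    obtain ⟨t, ht⟩ := IsIntegrallyClosed.isIntegral_iff.mp h3
    exact ⟨t, by rw [← ht]; simp⟩
  intro u
  set z : K := algebraMap (𝓞 K) K ↑u with hzdef
  set w : K := algebraMap (𝓞 K) K ↑(u⁻¹) with hwdef
  have hzw : z * w = 1 := by
    rw [hzdef, hwdef, ← map_mul, ← map_one (algebraMap (𝓞 K) K)]
    congr 1
    exact u.mul_inv
  have hz_int : IsIntegral ℤ z := RingOfIntegers.isIntegral_coe _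
  have hw_int : IsIntegral ℤ w := RingOfIntegers.isIntegral_coe _
  obtain ⟨a, b, hzab⟩ := hrep z
  obtain ⟨a', b', hwab⟩ := hrep w
  obtain ⟨k, hk⟩ := hNint z a b hz_int hzab
  obtain ⟨k', hk'⟩ := hNint w a' b' hw_int hwab
  obtain ⟨t, ht⟩ := hTint z a b hz_int hzab
  have hprodC : (((a^2 - d*b^2) * (a'^2 - d*b'^2) : ℚ) : ℂ) = 1 := by
    rw [Rat.cast_mul, ← hval z a b hzab, ← hval w a' b' hwab]
    have hr : φ z * ψ z * (φ w * ψ w) = φ (z*w) * ψ (z*w) := by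
      rw [map_mul, map_mul]; ring
    rw [hr, hzw, map_one, map_one, mul_one]
  have hprod : (a^2 - (d:ℚ)*b^2) * (a'^2 - (d:ℚ)*b'^2) = 1 := by exact_mod_cast hprodC
  have hkk' : k * k' = 1 := by
    have : ((k * k' : ℤ) : ℚ) = 1 := by push_cast; rw [hk, hk']; exact hprod
    exact_mod_cast this
  have hk0 : 0 ≤ k := by
    have : (0:ℚ) ≤ (k:ℚ) := by rw [hk]; nlinarith [sq_nonneg a, sq_nonneg b]
    exact_mod_cast this
  have hk1 : k = 1 := by
    rcases Int.isUnit_iff.mp (IsUnit.of_mul_eq_one k' hkk') with h | h <;> omega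
  have hN1 : a^2 - (d:ℚ)*b^2 = 1 := by rw [← hk, hk1]; norm_num
  by_cases hb : b = 0
  · -- z = ±1
    rw [hb] at hN1
    have ha : a = 1 ∨ a = -1 := by
      have h1 : (a-1)*(a+1) = 0 := by nlinarith
      rcases mul_eq_zero.mp h1 with h | h
      · left; linarith
      · right; linarith
    rcases ha with h | h
    · left
      apply NumberField.RingOfIntegers.coe_injective
      rw [map_one]
      show z = 1
      rw [hzab, hb, h]
      norm_num
    · right
      apply NumberField.RingOfIntegers.coe_injective
      rw [map_neg, map_one]
      show z = -1
      rw [hzab, hb, h]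
      norm_num
  · exfalso
    have hbQ : (0:ℚ) < b^2 := by positivity
    have ht2 : t^2 < 4 := by
      have h1 : (t:ℚ)^2 < 4 := by
        rw [ht]
        nlinarith [mul_le_mul_of_nonneg_right hdQ (le_of_lt hbQ)]
      exact_mod_cast h1
    have ht3 : -2 < t := by nlinarith [sq_nonneg (t + 2)]
    have ht4 : t < 2 := by nlinarith [sq_nonneg (t - 2)]
    -- case helpers
    have case1 : (d:ℚ) * b^2 = -1 → False := by
      intro h0
      have hr : (b * (d:ℚ))^2 = ((-d : ℤ) : ℚ) := by
        push_cast
        linear_combination (d:ℚ) * h0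
      obtain ⟨kk, hkk⟩ := ratRoot _ _ hr
      have hdvd : kk * kk ∣ d := ⟨-1, by linear_combination hkk⟩
      rcases Int.isUnit_iff.mp (hdsf kk hdvd) with h | h <;> subst h <;> omega
    have case34 : (d:ℚ) * b^2 = -3/4 → False := by
      intro h0
      have hr : (2 * b * (d:ℚ))^2 = ((-3*d : ℤ) : ℚ) := by
        push_cast
        linear_combination (4*(d:ℚ)) * h0
      obtain ⟨kk, hkk⟩ := ratRoot _ _ hr
      have h32 : (3:ℤ) ∣ kk^2 := ⟨-d, by linarith⟩
      have h3 : (3:ℤ) ∣ kk := Int.Prime.dvd_pow' (by norm_num) h32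
      obtain ⟨s, rfl⟩ := h3
      have h9 : 9 * s^2 = -3 * d := by linear_combination hkk
      have hds : d = -3 * s^2 := by linarith
      have hdvd : s * s ∣ d := ⟨-3, by linear_combination hds⟩
      rcases Int.isUnit_iff.mp (hdsf s hdvd) with h | h <;> subst h <;> omega
    interval_cases t
    · -- t = -1 : a = -1/2
      have ha : a = -1/2 := by
        have : ((-1 : ℤ):ℚ) = 2*a := ht
        push_cast at this; linarith
      apply case34
      rw [ha] at hN1; linarith
    · -- t = 0 : a = 0
      have ha : a = 0 := by
        have : ((0 : ℤ):ℚ) = 2*a := ht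
        push_cast at this; linarith
      apply case1
      rw [ha] at hN1; linarith
    · -- t = 1
      have ha : a = 1/2 := by
        have : ((1 : ℤ):ℚ) = 2*a := ht
        push_cast at this; linarith
      apply case34
      rw [ha] at hN1; linarith
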